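/- Let F ∈ C^{m,γ}(ℝⁿ) (m ≥ 1 integer, 0 ≤ γ ≤ 1) and let K ⊂ ℝⁿ be a compact set such that D^j F(x) = 0 for every x ∈ K and every multi-index j with 1 ≤ |j| ≤ m, and such that the image F(K) has Lebesgue measure zero; if γ > 0 assume in addition that lim_{ε→0⁺} |∇^m F|_{C^{0,γ}(K_ε)} = 0. For each ε > 0 choose finitely many disjoint open intervals covering F(K) with total length less than ε, let A_ε be their union, and define η_ε(t) := ∫_0^t 1_{A_ε}(s) ds. Define the jet f_ε = {f_ε^{(j)}}_{|j|≤m} on K by f_ε^{(0)} := η_ε ∘ (F|_K) and f_ε^{(j)} := 0 for 1 ≤ |j| ≤ m. Then ‖f_ε‖_{C^{m,γ}_jet(K)} ≤ δ(ε) for some function δ with δ(ε) → 0 as ε → 0⁺ (uniformly over all admissible choices of intervals). -/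

import Mathlib

open MeasureTheory Filter Topology Metric Set
open scoped ENNReal NNReal Classical

noncomputable section

namespace DFA

abbrev Euc (n : ℕ) := EuclideanSpace ℝ (Fin n)
abbrev E2 := EuclideanSpace ℝ (Fin 2)

/-- The `γ`-Hölder seminorm of `f` on the set `E`, valued in `ℝ≥0∞`. -/
def eHolder {X Y : Type*} [PseudoEMetricSpace X] [PseudoEMetricSpace Y]
    (γ : ℝ) (f : X → Y) (E : Set X) : ℝ≥0∞ :=
  ⨆ (x : X) (_ : x ∈ E) (y : X) (_ : y ∈ E) (_ : x ≠ y), edist (f x) (f y) / edist x y ^ γ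

/-- The finite set of multi-indices of order at most `m`. -/
def mIdx (n m : ℕ) : Finset (Fin n → ℕ) :=
  (Finset.Icc 0 (fun _ => m)).filter (fun j => (∑ i, j i) ≤ m)

/-- The `m`-th order Taylor polynomial of the jet `f` centred at `y`, evaluated at `x`. -/
def taylorPoly {n : ℕ} (m : ℕ) (f : (Fin n → ℕ) → Euc n → ℝ) (y x : Euc n) : ℝ :=
  ∑ j ∈ mIdx n m, (((∏ i, (j i).factorial : ℕ)) : ℝ)⁻¹ * f j y * ∏ i, (x i - y i) ^ j i

/-- The Taylor remainder `R_j f(x,y)` of order `m` of the jet `f`. -/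
def jetRem {n : ℕ} (m : ℕ) (f : (Fin n → ℕ) → Euc n → ℝ) (j : Fin n → ℕ)
    (x y : Euc n) : ℝ :=
  f j x - ∑ l ∈ (mIdx n m).filter (fun l => (∑ i, (j i + l i)) ≤ m),
    (((∏ i, (l i).factorial : ℕ)) : ℝ)⁻¹ * f (fun i => j i + l i) y * ∏ i, (x i - y i) ^ l i

/-- The `C^{m,γ}` jet norm of the jet `f` on `K`, valued in `ℝ≥0∞`:
the supremum over `|j| ≤ m` and `x ≠ y` in `K` of
`max {|f^{(j)}(x)|, |R_j f(x,y)| / |x-y|^{m+γ-|j|}}`. -/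
def jetNormE {n : ℕ} (m : ℕ) (γ : ℝ) (K : Set (Euc n))
    (f : (Fin n → ℕ) → Euc n → ℝ) : ℝ≥0∞ :=
  ⨆ (j : Fin n → ℕ) (_ : (∑ i, j i) ≤ m) (x : Euc n) (_ : x ∈ K),
    max (‖f j x‖₊ : ℝ≥0∞)
      (⨆ (y : Euc n) (_ : y ∈ K) (_ : x ≠ y),
        (‖jetRem m f j x y‖₊ : ℝ≥0∞) / edist x y ^ ((m : ℝ) + γ - (∑ i, j i : ℕ)))

/-- `A ⊆ ℝ` is the union of the finitely many pairwise disjoint open intervals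
`(a i, b i)`. -/
def IntervalFamily (N : ℕ) (a b : Fin N → ℝ) (A : Set ℝ) : Prop :=
  A = (⋃ i, Set.Ioo (a i) (b i)) ∧ (∀ i, a i < b i) ∧
    ∀ i i', i ≠ i' → Disjoint (Set.Ioo (a i) (b i)) (Set.Ioo (a i') (b i'))

/-- The monotone compression map `η_A(t) = ∫_0^t 1_A(s) ds`. -/
def etaComp (A : Set ℝ) (t : ℝ) : ℝ :=
  ∫ s in (0 : ℝ)..t, A.indicator (fun _ => (1 : ℝ)) s

/-! ### Auxiliary lemmas on `etaComp` -/

lemma eta_intable {A : Set ℝ} (hA : MeasurableSet A) (u v : ℝ) :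
    IntervalIntegrable (A.indicator fun _ => (1 : ℝ)) volume u v := by
  rw [intervalIntegrable_iff]
  exact (integrableOn_const measure_Ioc_lt_top.ne).indicator hA

lemma eta_lip {A : Set ℝ} (u v : ℝ) :
    |∫ s in u..v, A.indicator (fun _ => (1 : ℝ)) s| ≤ |v - u| := by
  have := intervalIntegral.norm_integral_le_of_norm_le_const
    (C := 1) (f := A.indicator fun _ => (1 : ℝ)) (a := u) (b := v) ?_
  · simpa using this
  · intro x _
    rw [Real.norm_eq_abs]
    rcases Set.indicator_eq_zero_or_self A (fun _ => (1:ℝ)) x with h | h <;> simp [h]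

lemma eta_vol {A : Set ℝ} (hA : MeasurableSet A) (hfin : volume A ≠ ⊤) (u v : ℝ) :
    |∫ s in u..v, A.indicator (fun _ => (1 : ℝ)) s| ≤ (volume A).toReal := by
  have key : ∀ u v : ℝ, u ≤ v →
      |∫ s in u..v, A.indicator (fun _ => (1 : ℝ)) s| ≤ (volume A).toReal := by
    intro u v huv
    rw [intervalIntegral.integral_of_le huv, integral_indicator hA, setIntegral_const]
    rw [smul_eq_mul, mul_one, abs_of_nonneg measureReal_nonneg, measureReal_def]
    rw [Measure.restrict_apply hA]
    exact ENNReal.toReal_mono hfin (measure_mono Set.inter_subset_left)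
  rcases le_total u v with h | h
  · exact key u v h
  · rw [intervalIntegral.integral_symm, abs_neg]
    exact key v u h

lemma etaComp_sub {A : Set ℝ} (hA : MeasurableSet A) (s t : ℝ) :
    etaComp A s - etaComp A t = ∫ x in t..s, A.indicator (fun _ => (1 : ℝ)) x := by
  rw [etaComp, etaComp, intervalIntegral.integral_interval_sub_left (eta_intable hA 0 s)
    (eta_intable hA 0 t)]

/-! ### Segment estimates -/

lemma path_hasDerivAt {n : ℕ} (y v : Euc n) (t : ℝ) :
    HasDerivAt (fun s : ℝ => y + s • v) v t := by
  simpa using ((hasDerivAt_id t).smul_const v).const_add y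

lemma psi_hasDerivAt {n : ℕ} {m : ℕ} {F : Euc n → ℝ} (hF : ContDiff ℝ (m : ℕ∞) F)
    {k : ℕ} (hk : k < m) (y v : Euc n) (t : ℝ) :
    HasDerivAt (fun s : ℝ => iteratedFDeriv ℝ k F (y + s • v))
      ((fderiv ℝ (iteratedFDeriv ℝ k F) (y + t • v)) v) t := by
  have hdiff : DifferentiableAt ℝ (iteratedFDeriv ℝ k F) (y + t • v) :=
    (hF.differentiable_iteratedFDeriv (by exact_mod_cast hk)).differentiableAt
  exact hdiff.hasFDerivAt.comp_hasDerivAt t (path_hasDerivAt y v t)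

lemma segment_est {n m : ℕ} (hm : 1 ≤ m) {F : Euc n → ℝ} (hF : ContDiff ℝ (m : ℕ∞) F)
    {x y : Euc n} {A : ℝ} (hA : 0 ≤ A)
    (h0 : ∀ i : ℕ, 1 ≤ i → i ≤ m → iteratedFDeriv ℝ i F y = 0)
    (hbound : ∀ t ∈ Set.Icc (0:ℝ) 1, ‖iteratedFDeriv ℝ m F (y + t • (x - y))‖ ≤ A) :
    |F x - F y| ≤ A * ‖x - y‖ ^ (m - 1) * ‖x - y‖ := by
  set v := x - y with hv
  have claim : ∀ i : ℕ, i ≤ m - 1 → ∀ t ∈ Set.Icc (0:ℝ) 1,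
      ‖iteratedFDeriv ℝ (m - i) F (y + t • v)‖ ≤ A * ‖v‖ ^ i := by
    intro i
    induction i with
    | zero =>
      intro _ t ht
      simpa using hbound t ht
    | succ i IH =>
      intro hi t ht
      have hi' : i ≤ m - 1 := le_trans (Nat.le_succ i) hi
      have hki : m - (i + 1) + 1 = m - i := by omega
      have hklt : m - (i + 1) < m := by omega
      have hk1 : 1 ≤ m - (i + 1) := by omega
      have hder : ∀ s ∈ Set.Icc (0:ℝ) 1,
          HasDerivWithinAt (fun s : ℝ => iteratedFDeriv ℝ (m - (i+1)) F (y + s • v))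
            ((fderiv ℝ (iteratedFDeriv ℝ (m - (i+1)) F) (y + s • v)) v) (Set.Icc 0 1) s :=
        fun s _ => (psi_hasDerivAt hF hklt y v s).hasDerivWithinAt
      have hbnd : ∀ s ∈ Set.Icc (0:ℝ) 1,
          ‖(fderiv ℝ (iteratedFDeriv ℝ (m - (i+1)) F) (y + s • v)) v‖ ≤ A * ‖v‖ ^ i * ‖v‖ := by
        intro s hs
        calc ‖(fderiv ℝ (iteratedFDeriv ℝ (m - (i+1)) F) (y + s • v)) v‖
            ≤ ‖fderiv ℝ (iteratedFDeriv ℝ (m - (i+1)) F) (y + s • v)‖ * ‖v‖ :=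
              ContinuousLinearMap.le_opNorm _ v
          _ = ‖iteratedFDeriv ℝ (m - (i+1) + 1) F (y + s • v)‖ * ‖v‖ := by
              rw [norm_fderiv_iteratedFDeriv]
          _ ≤ A * ‖v‖ ^ i * ‖v‖ := by
              rw [hki]
              exact mul_le_mul_of_nonneg_right (IH hi' s hs) (norm_nonneg v)
      have h0mem : (0:ℝ) ∈ Set.Icc (0:ℝ) 1 := by constructor <;> norm_num
      have := (convex_Icc (0:ℝ) 1).norm_image_sub_le_of_norm_hasDerivWithin_le
        hder hbnd h0mem ht
      have hzero0 : iteratedFDeriv ℝ (m - (i+1)) F (y + (0:ℝ) • v) = 0 := by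
        rw [zero_smul, add_zero]
        exact h0 _ hk1 (by omega)
      rw [hzero0, sub_zero, sub_zero] at this
      calc ‖iteratedFDeriv ℝ (m - (i+1)) F (y + t • v)‖
          ≤ A * ‖v‖ ^ i * ‖v‖ * ‖t‖ := this
        _ ≤ A * ‖v‖ ^ i * ‖v‖ * 1 := by
            apply mul_le_mul_of_nonneg_left _ (by positivity)
            rw [Real.norm_eq_abs, abs_of_nonneg ht.1]; exact ht.2
        _ = A * ‖v‖ ^ (i + 1) := by ring
  have hder : ∀ s ∈ Set.Icc (0:ℝ) 1,
      HasDerivWithinAt (fun s : ℝ => F (y + s • v)) ((fderiv ℝ F (y + s • v)) v)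
        (Set.Icc 0 1) s := by
    intro s _
    exact (((hF.differentiable (by exact_mod_cast (show m ≠ 0 by omega))) (y + s • v)).hasFDerivAt.comp_hasDerivAt
      s (path_hasDerivAt y v s)).hasDerivWithinAt
  have hbnd : ∀ s ∈ Set.Icc (0:ℝ) 1, ‖(fderiv ℝ F (y + s • v)) v‖ ≤ A * ‖v‖ ^ (m-1) * ‖v‖ := by
    intro s hs
    calc ‖(fderiv ℝ F (y + s • v)) v‖
        = ‖iteratedFDeriv ℝ 1 F (y + s • v) (fun _ : Fin 1 => v)‖ := by
          rw [iteratedFDeriv_one_apply]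
      _ ≤ ‖iteratedFDeriv ℝ 1 F (y + s • v)‖ * ‖v‖ := by
          simpa using ContinuousMultilinearMap.le_opNorm
            (iteratedFDeriv ℝ 1 F (y + s • v)) (fun _ : Fin 1 => v)
      _ ≤ A * ‖v‖ ^ (m-1) * ‖v‖ := by
          have := claim (m - 1) le_rfl s hs
          rw [show m - (m-1) = 1 by omega] at this
          exact mul_le_mul_of_nonneg_right this (norm_nonneg v)
  have h0mem : (0:ℝ) ∈ Set.Icc (0:ℝ) 1 := by constructor <;> norm_num
  have h1mem : (1:ℝ) ∈ Set.Icc (0:ℝ) 1 := by constructor <;> norm_num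
  have := (convex_Icc (0:ℝ) 1).norm_image_sub_le_of_norm_hasDerivWithin_le
    hder hbnd h0mem h1mem
  simp only [one_smul, zero_smul, add_zero] at this
  rw [show y + v = x by rw [hv]; abel] at this
  simpa using this

lemma provider {n m : ℕ} {γ : ℝ} (hγ0 : 0 ≤ γ)
    {F : Euc n → ℝ} (hF : ContDiff ℝ (m : ℕ∞) F)
    {K : Set (Euc n)} (hK : IsCompact K)
    (hzero : ∀ x ∈ K, iteratedFDeriv ℝ m F x = 0)
    (hlim : 0 < γ → Tendsto (fun ε => eHolder γ (iteratedFDeriv ℝ m F)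
      (Metric.thickening ε K)) (𝓝[>] (0 : ℝ)) (𝓝 0)) :
    ∀ d : ℝ, 0 < d → ∃ r > 0, ∀ y ∈ K, ∀ z : Euc n, dist z y ≤ r →
      ‖iteratedFDeriv ℝ m F z‖ ≤ d * dist z y ^ γ := by
  intro d hd
  rcases hγ0.lt_or_eq with hγ | hγ
  · have hev : ∀ᶠ ε in 𝓝[>] (0:ℝ),
        eHolder γ (iteratedFDeriv ℝ m F) (Metric.thickening ε K) < ENNReal.ofReal d :=
      (hlim hγ).eventually_lt_const (by simpa using ENNReal.ofReal_pos.2 hd)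
    obtain ⟨ε₀, hS, hε₀'⟩ := (hev.and (eventually_mem_nhdsWithin)).exists
    have hε₀ : (0:ℝ) < ε₀ := hε₀'
    refine ⟨ε₀ / 2, by positivity, ?_⟩
    intro y hy z hz
    by_cases hzy : z = y
    · subst hzy
      rw [hzero z hy, norm_zero]
      positivity
    have hyT : y ∈ Metric.thickening ε₀ K :=
      Metric.mem_thickening_iff.2 ⟨y, hy, by simpa using hε₀⟩
    have hzT : z ∈ Metric.thickening ε₀ K :=
      Metric.mem_thickening_iff.2 ⟨y, hy, lt_of_le_of_lt hz (by linarith [hε₀])⟩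
    have hle : edist (iteratedFDeriv ℝ m F z) (iteratedFDeriv ℝ m F y) / edist z y ^ γ
        ≤ eHolder γ (iteratedFDeriv ℝ m F) (Metric.thickening ε₀ K) :=
      le_iSup_of_le z <| le_iSup_of_le hzT <| le_iSup_of_le y <| le_iSup_of_le hyT <|
        le_iSup_of_le hzy le_rfl
    have hlt := lt_of_le_of_lt hle hS
    have hdzy : 0 < dist z y := dist_pos.2 hzy
    have hezy : edist z y ≠ 0 := fun h => hzy (edist_eq_zero.1 h)
    have hpow_ne : edist z y ^ γ ≠ 0 :=
      (ENNReal.rpow_pos (pos_iff_ne_zero.2 hezy) (edist_ne_top z y)).ne'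
    have hpow_top : edist z y ^ γ ≠ ⊤ :=
      ENNReal.rpow_ne_top_of_nonneg hγ0 (edist_ne_top z y)
    have hmul : edist (iteratedFDeriv ℝ m F z) (iteratedFDeriv ℝ m F y)
        ≤ ENNReal.ofReal d * edist z y ^ γ :=
      (ENNReal.div_le_iff hpow_ne hpow_top).1 hlt.le
    rw [hzero y hy] at hmul
    have hed : edist (iteratedFDeriv ℝ m F z) 0 = ENNReal.ofReal ‖iteratedFDeriv ℝ m F z‖ := by
      rw [edist_dist, dist_zero_right]
    rw [hed, edist_dist, ENNReal.ofReal_rpow_of_pos hdzy, ← ENNReal.ofReal_mul hd.le] at hmul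
    exact (ENNReal.ofReal_le_ofReal_iff (by positivity)).1 hmul
  · subst hγ
    have hcont : Continuous (iteratedFDeriv ℝ m F) := hF.continuous_iteratedFDeriv le_rfl
    have hU : IsOpen {z : Euc n | ‖iteratedFDeriv ℝ m F z‖ < d} :=
      isOpen_lt hcont.norm continuous_const
    have hKU : K ⊆ {z : Euc n | ‖iteratedFDeriv ℝ m F z‖ < d} := by
      intro z hz; simp [hzero z hz, hd]
    obtain ⟨r, hr, hsub⟩ := hK.exists_thickening_subset_open hU hKU
    refine ⟨r / 2, by positivity, ?_⟩
    intro y hy z hz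
    have hzT : z ∈ Metric.thickening r K :=
      Metric.mem_thickening_iff.2 ⟨y, hy, lt_of_le_of_lt hz (by linarith)⟩
    have := hsub hzT
    rw [Real.rpow_zero, mul_one]
    exact this.le

lemma core {n m : ℕ} (hm : 1 ≤ m) {γ : ℝ} (hγ0 : 0 ≤ γ)
    {F : Euc n → ℝ} (hF : ContDiff ℝ (m : ℕ∞) F)
    {K : Set (Euc n)} (hK : IsCompact K)
    (hzero : ∀ x ∈ K, ∀ i : ℕ, 1 ≤ i → i ≤ m → iteratedFDeriv ℝ i F x = 0)
    (hlim : 0 < γ → Tendsto (fun ε => eHolder γ (iteratedFDeriv ℝ m F)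
      (Metric.thickening ε K)) (𝓝[>] (0 : ℝ)) (𝓝 0)) :
    ∀ d : ℝ, 0 < d → ∃ r > 0, ∀ x ∈ K, ∀ y ∈ K, dist x y ≤ r →
      |F x - F y| ≤ d * dist x y ^ ((m : ℝ) + γ) := by
  intro d hd
  obtain ⟨r, hr, hprov⟩ := provider hγ0 hF hK
    (fun x hx => hzero x hx m hm le_rfl) hlim d hd
  refine ⟨r, hr, ?_⟩
  intro x hx y hy hxy
  by_cases hxyeq : x = y
  · subst hxyeq
    simp only [sub_self, abs_zero, dist_self]
    rw [Real.zero_rpow (by positivity), mul_zero]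
  have hp : 0 < dist x y := dist_pos.2 hxyeq
  have hbound : ∀ t ∈ Set.Icc (0:ℝ) 1,
      ‖iteratedFDeriv ℝ m F (y + t • (x - y))‖ ≤ d * dist x y ^ γ := by
    intro t ht
    have hdzy : dist (y + t • (x - y)) y = t * dist x y := by
      rw [dist_eq_norm, add_sub_cancel_left, norm_smul, Real.norm_eq_abs,
        abs_of_nonneg ht.1, dist_eq_norm]
    have h1 : dist (y + t • (x - y)) y ≤ r := by
      rw [hdzy]
      calc t * dist x y ≤ 1 * dist x y := mul_le_mul_of_nonneg_right ht.2 dist_nonneg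
        _ = dist x y := one_mul _
        _ ≤ r := hxy
    calc ‖iteratedFDeriv ℝ m F (y + t • (x - y))‖
        ≤ d * dist (y + t • (x - y)) y ^ γ := hprov y hy _ h1
      _ ≤ d * dist x y ^ γ := by
          apply mul_le_mul_of_nonneg_left _ hd.le
          apply Real.rpow_le_rpow dist_nonneg _ hγ0
          rw [hdzy]
          calc t * dist x y ≤ 1 * dist x y := mul_le_mul_of_nonneg_right ht.2 dist_nonneg
            _ = dist x y := one_mul _
  have hseg := segment_est hm hF (by positivity) (fun i h1 h2 => hzero y hy i h1 h2) hbound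
  have e1 : dist x y ^ ((m:ℝ)+γ) = dist x y ^ γ * dist x y ^ (m-1) * dist x y := by
    rw [show (m:ℝ)+γ = γ + ((m-1:ℕ):ℝ) + 1 by push_cast [Nat.cast_sub hm]; ring,
      Real.rpow_add hp, Real.rpow_add hp, Real.rpow_one, Real.rpow_natCast]
  rw [e1]
  calc |F x - F y| ≤ d * dist x y ^ γ * ‖x - y‖ ^ (m-1) * ‖x - y‖ := hseg
    _ = d * (dist x y ^ γ * dist x y ^ (m-1) * dist x y) := by
        rw [← dist_eq_norm]; ring

lemma jetRem_ne_zero {n m : ℕ} (g : Euc n → ℝ) {j : Fin n → ℕ} (hj : j ≠ 0) (x y : Euc n) :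
    jetRem m (fun j z => if j = 0 then g z else 0) j x y = 0 := by
  have hterm : ∀ l : Fin n → ℕ, (fun i => j i + l i) ≠ (0 : Fin n → ℕ) := by
    intro l h
    apply hj
    funext i
    have := congrFun h i
    simp only [Pi.zero_apply, Nat.add_eq_zero] at this
    simp [this.1]
  unfold jetRem
  beta_reduce
  rw [if_neg hj, Finset.sum_eq_zero (fun l _ => by rw [if_neg (hterm l)]; ring), sub_zero]

lemma zero_mem_filter {n m : ℕ} :
    (0 : Fin n → ℕ) ∈ (mIdx n m).filter
      (fun l => (∑ i, ((0 : Fin n → ℕ) i + l i)) ≤ m) := by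
  unfold mIdx
  simp [Finset.mem_filter, Finset.mem_Icc, Pi.le_def]

lemma jetRem_zero {n m : ℕ} (g : Euc n → ℝ) (x y : Euc n) :
    jetRem m (fun j z => if j = 0 then g z else 0) 0 x y = g x - g y := by
  unfold jetRem
  beta_reduce
  rw [if_pos rfl]
  congr 1
  rw [Finset.sum_eq_single (0 : Fin n → ℕ)]
  · have h00 : (fun i => (0 : Fin n → ℕ) i + (0 : Fin n → ℕ) i) = (0 : Fin n → ℕ) := by
      funext i; simp
    rw [h00, if_pos rfl]
    simp
  · intro l _ hlne
    have hfl : (fun i => (0 : Fin n → ℕ) i + l i) = l := by funext i; simp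
    rw [hfl, if_neg hlne]
    ring
  · intro h
    exact absurd zero_mem_filter h

lemma rpow_tendsto {p : ℝ} (hp : 0 < p) :
    Tendsto (fun ε : ℝ => ε ^ p) (𝓝[>] 0) (𝓝[>] 0) := by
  rw [tendsto_nhdsWithin_iff]
  constructor
  · have h := (Real.continuousAt_rpow_const 0 p (Or.inr hp.le)).tendsto
    rw [Real.zero_rpow hp.ne'] at h
    exact h.mono_left nhdsWithin_le_nhds
  · exact eventually_mem_nhdsWithin.mono fun x hx => Real.rpow_pos_of_pos hx p

/-- **Monotone compression in Hölder spaces** (Lemma 5.1). Let `F ∈ C^{m,γ}(ℝⁿ)` with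
`D^j F = 0` on the compact set `K` for `1 ≤ |j| ≤ m`, `|F(K)| = 0`, and (if `γ > 0`)
`|∇^m F|_{C^{0,γ}(K_ε)} → 0`. Then the compressed jets
`f_ε = {η_ε ∘ F|_K, 0, …, 0}`, built from any finite family of disjoint open intervals
covering `F(K)` with total length `< ε`, satisfy `‖f_ε‖_{C^{m,γ}_jet(K)} ≤ δ(ε)` with
`δ(ε) → 0` as `ε → 0⁺`. -/
theorem monotone_compression_holder
    (n m : ℕ) (hm : 1 ≤ m) (γ : ℝ) (hγ0 : 0 ≤ γ) (hγ1 : γ ≤ 1)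
    (F : Euc n → ℝ) (hF : ContDiff ℝ m F)
    (hFγ : 0 < γ → eHolder γ (iteratedFDeriv ℝ m F) Set.univ < ⊤)
    (K : Set (Euc n)) (hK : IsCompact K)
    (hzero : ∀ x ∈ K, ∀ i : ℕ, 1 ≤ i → i ≤ m → iteratedFDeriv ℝ i F x = 0)
    (himg : volume (F '' K) = 0)
    (hlim : 0 < γ → Tendsto (fun ε => eHolder γ (iteratedFDeriv ℝ m F)
      (Metric.thickening ε K)) (𝓝[>] (0 : ℝ)) (𝓝 0)) :
    ∃ δ : ℝ → ℝ, Tendsto δ (𝓝[>] (0 : ℝ)) (𝓝 0) ∧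
      ∀ ε : ℝ, 0 < ε → ∀ (N : ℕ) (a b : Fin N → ℝ) (A : Set ℝ),
        IntervalFamily N a b A → F '' K ⊆ A → (∑ i, (b i - a i)) < ε →
        jetNormE m γ K (fun j x => if j = 0 then etaComp A (F x) else 0) ≤
          ENNReal.ofReal (δ ε) := by
  have hmγ : (0:ℝ) ≤ (m:ℝ) + γ := by positivity
  have hcore := core hm hγ0 hF hK hzero hlim
  -- global bound
  obtain ⟨r₁, hr₁, hc1⟩ := hcore 1 one_pos
  obtain ⟨M, hM⟩ := hK.exists_bound_of_continuousOn hF.continuous.continuousOn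
  set M' : ℝ := max M 0 with hM'
  have hM'0 : 0 ≤ M' := le_max_right _ _
  have hp1 : (0:ℝ) < r₁ ^ ((m:ℝ)+γ) := Real.rpow_pos_of_pos hr₁ _
  set c₀ : ℝ := 1 + 2 * M' / r₁ ^ ((m:ℝ)+γ) with hc₀
  have hc₀1 : (1:ℝ) ≤ c₀ := by
    rw [hc₀]
    have : 0 ≤ 2 * M' / r₁ ^ ((m:ℝ)+γ) := by positivity
    linarith
  have hglob : ∀ x ∈ K, ∀ y ∈ K, |F x - F y| ≤ c₀ * dist x y ^ ((m:ℝ)+γ) := by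
    intro x hx y hy
    rcases le_or_gt (dist x y) r₁ with h | h
    · calc |F x - F y| ≤ 1 * dist x y ^ ((m:ℝ)+γ) := hc1 x hx y hy h
        _ ≤ c₀ * dist x y ^ ((m:ℝ)+γ) :=
            mul_le_mul_of_nonneg_right hc₀1 (Real.rpow_nonneg dist_nonneg _)
    · have hq : r₁ ^ ((m:ℝ)+γ) ≤ dist x y ^ ((m:ℝ)+γ) :=
        Real.rpow_le_rpow hr₁.le h.le hmγ
      calc |F x - F y| = ‖F x - F y‖ := (Real.norm_eq_abs _).symm
        _ ≤ ‖F x‖ + ‖F y‖ := norm_sub_le _ _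
        _ ≤ 2 * M' := by
            have h1 := hM x hx
            have h2 := hM y hy
            have h3 : M ≤ M' := le_max_left _ _
            linarith
        _ = (2 * M' / r₁ ^ ((m:ℝ)+γ)) * r₁ ^ ((m:ℝ)+γ) := by field_simp
        _ ≤ (2 * M' / r₁ ^ ((m:ℝ)+γ)) * dist x y ^ ((m:ℝ)+γ) :=
            mul_le_mul_of_nonneg_left hq (by positivity)
        _ ≤ c₀ * dist x y ^ ((m:ℝ)+γ) := by
            apply mul_le_mul_of_nonneg_right _ (Real.rpow_nonneg dist_nonneg _)
            rw [hc₀]; linarith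
  -- the modulus σ
  set S : ℝ → Set ℝ := fun r => {c : ℝ | 0 ≤ c ∧ ∀ x ∈ K, ∀ y ∈ K, dist x y ≤ r →
    |F x - F y| ≤ c * dist x y ^ ((m:ℝ)+γ)} with hS
  set σ : ℝ → ℝ := fun r => sInf (S r) with hσ
  have hne : ∀ r, (S r).Nonempty := fun r =>
    ⟨c₀, by linarith, fun x hx y hy _ => hglob x hx y hy⟩
  have hbdd : ∀ r, BddBelow (S r) := fun r => ⟨0, fun c hc => hc.1⟩
  have hσ0 : ∀ r, 0 ≤ σ r := fun r => le_csInf (hne r) fun c hc => hc.1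
  have hσbound : ∀ r, ∀ x ∈ K, ∀ y ∈ K, dist x y ≤ r →
      |F x - F y| ≤ σ r * dist x y ^ ((m:ℝ)+γ) := by
    intro r x hx y hy hd
    by_cases hxy : x = y
    · subst hxy
      simp only [sub_self, abs_zero, dist_self]
      rw [Real.zero_rpow (by positivity), mul_zero]
    have hdp : 0 < dist x y := dist_pos.2 hxy
    have hpp : 0 < dist x y ^ ((m:ℝ)+γ) := Real.rpow_pos_of_pos hdp _
    have : |F x - F y| / dist x y ^ ((m:ℝ)+γ) ≤ σ r :=
      le_csInf (hne r) fun c hc => (div_le_iff₀ hpp).2 (hc.2 x hx y hy hd)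
    exact (div_le_iff₀ hpp).1 this
  have hσ_small : ∀ d : ℝ, 0 < d → ∃ r > 0, ∀ r' : ℝ, r' ∈ Set.Ioc 0 r → σ r' ≤ d := by
    intro d hd
    obtain ⟨r, hr, hcd⟩ := hcore d hd
    exact ⟨r, hr, fun r' hr' => csInf_le (hbdd r')
      ⟨hd.le, fun x hx y hy hdd => hcd x hx y hy (le_trans hdd hr'.2)⟩⟩
  have hσtend : Tendsto σ (𝓝[>] (0:ℝ)) (𝓝 0) := by
    rw [Metric.tendsto_nhdsWithin_nhds]
    intro e he
    obtain ⟨r, hr, hrd⟩ := hσ_small (e/2) (by linarith)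
    refine ⟨r, hr, ?_⟩
    intro x hx hdx
    have hx' : x ∈ Set.Ioc 0 r := by
      constructor
      · exact hx
      · rw [Real.dist_eq, sub_zero, abs_of_pos hx] at hdx
        exact hdx.le
    have h1 := hrd x hx'
    have h2 := hσ0 x
    rw [Real.dist_eq, sub_zero, abs_of_nonneg h2]
    linarith
  -- exponents
  set β : ℝ := 1 / (2 * ((m:ℝ) + 1)) with hβdef
  have hβ : 0 < β := by positivity
  have hβm : β * ((m:ℝ) + γ) ≤ 1/2 := by
    have h1 : (m:ℝ) + γ ≤ (m:ℝ) + 1 := by linarith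
    have h2 : β * ((m:ℝ) + 1) = 1/2 := by
      rw [hβdef]
      field_simp
    calc β * ((m:ℝ)+γ) ≤ β * ((m:ℝ)+1) := mul_le_mul_of_nonneg_left h1 hβ.le
      _ = 1/2 := h2
  set q : ℝ := 1 - β * ((m:ℝ) + γ) with hqdef
  have hqpos : 0 < q := by
    rw [hqdef]; linarith
  -- the function δ
  refine ⟨fun ε => ε + σ (ε ^ β) + 2 * ε ^ q, ?_, ?_⟩
  · have t1 : Tendsto (fun ε : ℝ => ε) (𝓝[>] (0:ℝ)) (𝓝 0) :=
      tendsto_id.mono_left nhdsWithin_le_nhds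
    have t2 : Tendsto (fun ε : ℝ => σ (ε ^ β)) (𝓝[>] (0:ℝ)) (𝓝 0) :=
      hσtend.comp (rpow_tendsto hβ)
    have t3 : Tendsto (fun ε : ℝ => 2 * ε ^ q) (𝓝[>] (0:ℝ)) (𝓝 0) := by
      have := ((rpow_tendsto hqpos).mono_right nhdsWithin_le_nhds).const_mul (2:ℝ)
      simpa using this
    have := (t1.add t2).add t3
    simpa using this
  · intro ε hε N a b A hfam hsub hsum
    obtain ⟨hA_eq, hab, hdisj⟩ := hfam
    have hAmeas : MeasurableSet A := by
      rw [hA_eq]; exact MeasurableSet.iUnion fun i => measurableSet_Ioo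
    have hvol_le : volume A ≤ ∑ i, ENNReal.ofReal (b i - a i) := by
      rw [hA_eq]
      calc volume (⋃ i, Set.Ioo (a i) (b i)) ≤ ∑' i, volume (Set.Ioo (a i) (b i)) :=
            measure_iUnion_le _
        _ = ∑ i, ENNReal.ofReal (b i - a i) := by
            rw [tsum_fintype]
            exact Finset.sum_congr rfl fun i _ => Real.volume_Ioo
    have hT_lt : (∑ i, ENNReal.ofReal (b i - a i)) < ⊤ :=
      ENNReal.sum_lt_top.2 fun i _ => ENNReal.ofReal_lt_top
    have hvolfin : volume A ≠ ⊤ := (lt_of_le_of_lt hvol_le hT_lt).ne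
    have hvolR : (volume A).toReal ≤ ε := by
      have h2 : (∑ i, ENNReal.ofReal (b i - a i)).toReal = ∑ i, (b i - a i) := by
        rw [ENNReal.toReal_sum fun i _ => ENNReal.ofReal_ne_top]
        exact Finset.sum_congr rfl fun i _ =>
          ENNReal.toReal_ofReal (by linarith [hab i])
      calc (volume A).toReal ≤ (∑ i, ENNReal.ofReal (b i - a i)).toReal :=
            ENNReal.toReal_mono hT_lt.ne hvol_le
        _ = ∑ i, (b i - a i) := h2
        _ ≤ ε := hsum.le
    have hη1 : ∀ t : ℝ, |etaComp A t| ≤ ε :=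
      fun t => le_trans (eta_vol hAmeas hvolfin 0 t) hvolR
    have hη2 : ∀ s t : ℝ, |etaComp A s - etaComp A t| ≤ |s - t| := by
      intro s t
      rw [etaComp_sub hAmeas]
      exact eta_lip t s
    set δe : ℝ := ε + σ (ε ^ β) + 2 * ε ^ q with hδe
    have hεq : 0 ≤ ε ^ q := Real.rpow_nonneg hε.le _
    have hσε : 0 ≤ σ (ε ^ β) := hσ0 _
    have hδ0 : 0 ≤ δe := by rw [hδe]; linarith
    have hεδ : ε ≤ δe := by rw [hδe]; linarith
    -- the key pointwise estimate
    have hkey : ∀ x ∈ K, ∀ y ∈ K,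
        |etaComp A (F x) - etaComp A (F y)| ≤ δe * dist x y ^ ((m:ℝ)+γ) := by
      intro x hx y hy
      rcases le_or_gt (dist x y) (ε ^ β) with h | h
      · calc |etaComp A (F x) - etaComp A (F y)| ≤ |F x - F y| := hη2 _ _
          _ ≤ σ (ε ^ β) * dist x y ^ ((m:ℝ)+γ) := hσbound _ x hx y hy h
          _ ≤ δe * dist x y ^ ((m:ℝ)+γ) := by
              apply mul_le_mul_of_nonneg_right _ (Real.rpow_nonneg dist_nonneg _)
              rw [hδe]; linarith
      · have hd1 : (ε ^ β) ^ ((m:ℝ)+γ) ≤ dist x y ^ ((m:ℝ)+γ) :=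
          Real.rpow_le_rpow (Real.rpow_nonneg hε.le _) h.le hmγ
        have hd2 : (ε ^ β) ^ ((m:ℝ)+γ) = ε ^ (β * ((m:ℝ)+γ)) :=
          (Real.rpow_mul hε.le β ((m:ℝ)+γ)).symm
        have hd3 : 2 * ε = 2 * ε ^ q * ε ^ (β * ((m:ℝ)+γ)) := by
          rw [mul_assoc, ← Real.rpow_add hε]
          rw [hqdef]
          norm_num
        calc |etaComp A (F x) - etaComp A (F y)|
            ≤ |etaComp A (F x)| + |etaComp A (F y)| := abs_sub _ _
          _ ≤ 2 * ε := by
              have := hη1 (F x); have := hη1 (F y); linarith [hη1 (F x), hη1 (F y)]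
          _ = 2 * ε ^ q * ε ^ (β * ((m:ℝ)+γ)) := hd3
          _ ≤ 2 * ε ^ q * dist x y ^ ((m:ℝ)+γ) := by
              apply mul_le_mul_of_nonneg_left _ (by positivity)
              rw [← hd2]; exact hd1
          _ ≤ δe * dist x y ^ ((m:ℝ)+γ) := by
              apply mul_le_mul_of_nonneg_right _ (Real.rpow_nonneg dist_nonneg _)
              rw [hδe]; linarith
    -- now bound the jet norm
    unfold jetNormE
    refine iSup_le fun j => iSup_le fun hj => iSup_le fun x => iSup_le fun hx => max_le ?_ ?_
    · by_cases hj0 : j = 0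
      · subst hj0
        simp only [if_pos rfl]
        rw [← enorm_eq_nnnorm, ← ofReal_norm, Real.norm_eq_abs]
        exact ENNReal.ofReal_le_ofReal (le_trans (hη1 (F x)) hεδ)
      · simp [if_neg hj0]
    · refine iSup_le fun y => iSup_le fun hy => iSup_le fun hxy => ?_
      by_cases hj0 : j = 0
      · subst hj0
        rw [jetRem_zero]
        have hsum0 : (∑ i, (0 : Fin n → ℕ) i : ℕ) = 0 := by simp
        rw [hsum0]
        have hdp : 0 < dist x y := dist_pos.2 hxy
        have hpow_ne : edist x y ^ ((m:ℝ) + γ - (0:ℕ)) ≠ 0 :=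
          (ENNReal.rpow_pos (pos_iff_ne_zero.2 (fun h => hxy (edist_eq_zero.1 h)))
            (edist_ne_top x y)).ne'
        have hpow_top : edist x y ^ ((m:ℝ) + γ - (0:ℕ)) ≠ ⊤ :=
          ENNReal.rpow_ne_top_of_nonneg (by simpa using hmγ) (edist_ne_top x y)
        rw [ENNReal.div_le_iff hpow_ne hpow_top]
        rw [← enorm_eq_nnnorm, ← ofReal_norm, Real.norm_eq_abs]
        have hee : edist x y ^ ((m:ℝ) + γ - (0:ℕ)) =
            ENNReal.ofReal (dist x y ^ ((m:ℝ)+γ)) := by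
          rw [edist_dist, ENNReal.ofReal_rpow_of_pos hdp]
          norm_num
        rw [hee, ← ENNReal.ofReal_mul hδ0]
        exact ENNReal.ofReal_le_ofReal (hkey x hx y hy)
      · rw [jetRem_ne_zero _ hj0]
        simp

end DFA
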